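/- arXiv:1807.04747 — 2 statements merged into one kernel-verified Lean document; each statement's English description precedes it below -/
import Mathlib

section
/- For a word $u$ and a monomial $v = e_{b_1}\cdots e_{b_n}$ in $\mathbb{Q}\langle e_0,e_1\rangle$ and $a \in \{0,1\}$, one has the identity $(u \shuffle v)e_a - u e_a \epsilon(v) = -\sum_{i=1}^{n} \big((u \shuffle e_{b_{i+1}}\cdots e_{b_n})e_a\big) \shuffle \epsilon(e_{b_1}\cdots e_{b_i})$. -/
open Finsupp

/-- Words in the letters `e₀, e₁`. -/
abbrev Word := List (Fin 2)

/-- The free noncommutative algebra `ℚ⟨e₀,e₁⟩`, as finitely supported functions on words. -/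
abbrev QA := Word →₀ ℚ

/-- Concatenation product on `ℚ⟨e₀,e₁⟩`. -/
noncomputable def conc (x y : QA) : QA :=
  x.sum fun u a => y.sum fun v b => Finsupp.single (u ++ v) (a * b)

/-- Shuffle product of two words. -/
noncomputable def sw : Word → Word → QA
  | [], v => Finsupp.single v 1
  | u :: us, [] => Finsupp.single (u :: us) 1
  | a :: u, b :: v =>
      Finsupp.mapDomain (a :: ·) (sw u (b :: v)) +
      Finsupp.mapDomain (b :: ·) (sw (a :: u) v)
termination_by u v => u.length + v.length

/-- Shuffle product on `ℚ⟨e₀,e₁⟩`, extended bilinearly. -/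
noncomputable def shuffle (x y : QA) : QA :=
  x.sum fun u a => y.sum fun v b => (a * b) • sw u v

/-- The anti-automorphism `ε` with `ε(e_a) = -e_a`. -/
noncomputable def eps (x : QA) : QA :=
  x.sum fun u a => Finsupp.single u.reverse ((-1 : ℚ) ^ u.length * a)

lemma conc_single_single (u v : Word) (r s : ℚ) :
    conc (Finsupp.single u r) (Finsupp.single v s) = Finsupp.single (u ++ v) (r * s) := by
  simp [conc, sum_single_index]

lemma conc_add_left (x y z : QA) : conc (x + y) z = conc x z + conc y z := by
  unfold conc
  rw [Finsupp.sum_add_index'] <;> intros <;> simp [add_mul, single_add, Finsupp.sum_add]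

lemma conc_add_right (x y z : QA) : conc x (y + z) = conc x y + conc x z := by
  unfold conc
  rw [← Finsupp.sum_add]
  apply Finsupp.sum_congr
  intro u _
  rw [Finsupp.sum_add_index'] <;> intros <;> simp [mul_add, single_add]

lemma conc_smul_left (r : ℚ) (x y : QA) : conc (r • x) y = r • conc x y := by
  unfold conc
  rw [Finsupp.sum_smul_index' (by intro u; simp), Finsupp.smul_sum]
  apply Finsupp.sum_congr
  intro u _
  rw [Finsupp.smul_sum]
  apply Finsupp.sum_congr
  intro v _
  rw [Finsupp.smul_single]
  congr 1
  first
  | (norm_num; ring)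
  | norm_num

lemma conc_smul_right (r : ℚ) (x y : QA) : conc x (r • y) = r • conc x y := by
  unfold conc
  rw [Finsupp.smul_sum]
  apply Finsupp.sum_congr
  intro u _
  rw [Finsupp.sum_smul_index' (by intro v; simp), Finsupp.smul_sum]
  apply Finsupp.sum_congr
  intro v _
  rw [Finsupp.smul_single]
  congr 1
  first
  | (norm_num; ring)
  | norm_num

lemma conc_zero_left (y : QA) : conc 0 y = 0 := by simp [conc]

lemma conc_zero_right (x : QA) : conc x 0 = 0 := by simp [conc]
lemma shuffle_single_single (u v : Word) (r s : ℚ) :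
    shuffle (Finsupp.single u r) (Finsupp.single v s) = (r * s) • sw u v := by
  simp [shuffle, sum_single_index]

lemma shuffle_add_left (x y z : QA) : shuffle (x + y) z = shuffle x z + shuffle y z := by
  unfold shuffle
  rw [Finsupp.sum_add_index'] <;> intros <;>
    simp [add_mul, add_smul, Finsupp.sum_add]

lemma shuffle_add_right (x y z : QA) : shuffle x (y + z) = shuffle x y + shuffle x z := by
  unfold shuffle
  rw [← Finsupp.sum_add]
  apply Finsupp.sum_congr
  intro u _
  rw [Finsupp.sum_add_index'] <;> intros <;> simp [mul_add, add_smul]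

lemma shuffle_smul_left (r : ℚ) (x y : QA) : shuffle (r • x) y = r • shuffle x y := by
  unfold shuffle
  rw [Finsupp.sum_smul_index' (by intro u; simp), Finsupp.smul_sum]
  apply Finsupp.sum_congr
  intro u _
  rw [Finsupp.smul_sum]
  apply Finsupp.sum_congr
  intro v _
  rw [smul_smul]
  congr 1
  norm_num
  ring

lemma shuffle_smul_right (r : ℚ) (x y : QA) : shuffle x (r • y) = r • shuffle x y := by
  unfold shuffle
  rw [Finsupp.smul_sum]
  apply Finsupp.sum_congr
  intro u _
  rw [Finsupp.sum_smul_index' (by intro v; simp), Finsupp.smul_sum]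
  apply Finsupp.sum_congr
  intro v _
  rw [smul_smul]
  congr 1
  norm_num
  ring

lemma shuffle_zero_left (y : QA) : shuffle 0 y = 0 := by simp [shuffle]

lemma shuffle_zero_right (x : QA) : shuffle x 0 = 0 := by simp [shuffle]

lemma shuffle_neg_right (x y : QA) : shuffle x (-y) = -shuffle x y := by
  have := shuffle_smul_right (-1) x y
  simpa using this

lemma conc_neg_right (x y : QA) : conc x (-y) = -conc x y := by
  have := conc_smul_right (-1) x y
  simpa using this

lemma eps_single (u : Word) (r : ℚ) :
    eps (Finsupp.single u r) = Finsupp.single u.reverse ((-1 : ℚ) ^ u.length * r) := by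
  simp [eps, sum_single_index]

lemma sw_nil_left (v : Word) : sw [] v = Finsupp.single v 1 := by rw [sw]

lemma sw_nil_right (u : Word) : sw u [] = Finsupp.single u 1 := by
  cases u <;> rw [sw]

lemma sw_cons_cons (a b : Fin 2) (u v : Word) :
    sw (a :: u) (b :: v) =
      Finsupp.mapDomain (a :: ·) (sw u (b :: v)) +
      Finsupp.mapDomain (b :: ·) (sw (a :: u) v) := by
  rw [sw]
lemma shuffle_unit_right (x : QA) : shuffle x (Finsupp.single ([] : Word) 1) = x := by
  unfold shuffle
  conv_rhs => rw [← Finsupp.sum_single x]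
  apply Finsupp.sum_congr
  intro u _
  rw [Finsupp.sum_single_index (by simp)]
  rw [mul_one, sw_nil_right, Finsupp.smul_single, smul_eq_mul, mul_one]

lemma shuffle_unit_left (y : QA) : shuffle (Finsupp.single ([] : Word) 1) y = y := by
  unfold shuffle
  rw [Finsupp.sum_single_index (by simp [Finsupp.sum])]
  conv_rhs => rw [← Finsupp.sum_single y]
  apply Finsupp.sum_congr
  intro v _
  rw [one_mul, sw_nil_left, Finsupp.smul_single, smul_eq_mul, mul_one]

lemma mapD_single (f : Word → Word) (u : Word) (r : ℚ) :
    Finsupp.mapDomain f (Finsupp.single u r) = Finsupp.single (f u) r :=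
  Finsupp.mapDomain_single

/-- bilinear first-letter recursion for the shuffle product -/
lemma shuffle_mapD_cons (a b : Fin 2) (x y : QA) :
    shuffle (Finsupp.mapDomain (a :: ·) x) (Finsupp.mapDomain (b :: ·) y) =
      Finsupp.mapDomain (a :: ·) (shuffle x (Finsupp.mapDomain (b :: ·) y)) +
      Finsupp.mapDomain (b :: ·) (shuffle (Finsupp.mapDomain (a :: ·) x) y) := by
  induction x using Finsupp.induction_linear with
  | zero => simp [shuffle_zero_left]
  | add f g hf hg =>
      simp only [Finsupp.mapDomain_add, shuffle_add_left, shuffle_add_right, hf, hg]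
      abel
  | single u r =>
      induction y using Finsupp.induction_linear with
      | zero => simp [shuffle_zero_right]
      | add f g hf hg =>
          simp only [Finsupp.mapDomain_add, shuffle_add_left, shuffle_add_right, hf, hg]
          abel
      | single v s =>
          simp only [mapD_single, shuffle_single_single, sw_cons_cons, smul_add,
            Finsupp.mapDomain_smul, Finsupp.mapDomain_add]
lemma mapD_comm (f g : Word → Word) (h : ∀ w, f (g w) = g (f w)) (z : QA) :
    Finsupp.mapDomain f (Finsupp.mapDomain g z) = Finsupp.mapDomain g (Finsupp.mapDomain f z) := by
  rw [← Finsupp.mapDomain_comp, ← Finsupp.mapDomain_comp]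
  exact Finsupp.mapDomain_congr fun w _ => h w

theorem sw_comm : ∀ (u v : Word), sw u v = sw v u
  | [], v => by rw [sw_nil_left, sw_nil_right]
  | u :: us, [] => by rw [sw_nil_left, sw_nil_right]
  | a :: u, b :: v => by
      rw [sw_cons_cons, sw_cons_cons, sw_comm u (b :: v), sw_comm (a :: u) v]
      exact add_comm _ _
termination_by u v => u.length + v.length

theorem sw_last : ∀ (x y : Word) (a b : Fin 2),
    sw (x ++ [a]) (y ++ [b]) =
      Finsupp.mapDomain (· ++ [a]) (sw x (y ++ [b])) +
      Finsupp.mapDomain (· ++ [b]) (sw (x ++ [a]) y)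
  | [], [], a, b => by
      simp only [List.nil_append]
      rw [sw_cons_cons]
      simp only [sw_nil_left, sw_nil_right, mapD_single, List.cons_append, List.nil_append]
      exact add_comm _ _
  | [], c :: y, a, b => by
      have IH := sw_last [] y a b
      simp only [List.nil_append, List.cons_append] at IH ⊢
      rw [sw_cons_cons, IH, sw_cons_cons (a := a) (b := c),
        Finsupp.mapDomain_add, Finsupp.mapDomain_add,
        mapD_comm (c :: ·) (· ++ [b]) (fun w => rfl) (sw [a] y)]
      simp only [sw_nil_left, sw_nil_right, mapD_single, List.cons_append, List.nil_append]
      abel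
  | c :: x, [], a, b => by
      have IH := sw_last x [] a b
      simp only [List.nil_append, List.cons_append] at IH ⊢
      rw [sw_cons_cons, IH, sw_cons_cons (a := c) (b := b),
        Finsupp.mapDomain_add, Finsupp.mapDomain_add,
        mapD_comm (c :: ·) (· ++ [a]) (fun w => rfl) (sw x [b])]
      simp only [sw_nil_left, sw_nil_right, mapD_single, List.cons_append, List.nil_append]
      abel
  | c :: x, d :: y, a, b => by
      have IH1 := sw_last x (d :: y) a b
      have IH2 := sw_last (c :: x) y a b
      simp only [List.nil_append, List.cons_append] at IH1 IH2 ⊢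
      rw [sw_cons_cons (a := c) (b := d), IH1, IH2,
        sw_cons_cons (a := c) (b := d) (u := x) (v := y ++ [b]),
        sw_cons_cons (a := c) (b := d) (u := x ++ [a]) (v := y),
        Finsupp.mapDomain_add, Finsupp.mapDomain_add, Finsupp.mapDomain_add,
        Finsupp.mapDomain_add,
        mapD_comm (c :: ·) (· ++ [a]) (fun w => rfl) (sw x (d :: (y ++ [b]))),
        mapD_comm (c :: ·) (· ++ [b]) (fun w => rfl) (sw (x ++ [a]) (d :: y)),
        mapD_comm (d :: ·) (· ++ [a]) (fun w => rfl) (sw (c :: x) (y ++ [b])),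
        mapD_comm (d :: ·) (· ++ [b]) (fun w => rfl) (sw (c :: (x ++ [a])) y)]
      abel
termination_by x y => x.length + y.length

lemma mapD_comm_rev (a : Fin 2) (z : QA) :
    Finsupp.mapDomain List.reverse (Finsupp.mapDomain (a :: ·) z) =
      Finsupp.mapDomain (· ++ [a]) (Finsupp.mapDomain List.reverse z) := by
  rw [← Finsupp.mapDomain_comp, ← Finsupp.mapDomain_comp]
  exact Finsupp.mapDomain_congr fun w _ => by simp [Function.comp]
theorem sw_rev : ∀ (u v : Word),
    Finsupp.mapDomain List.reverse (sw u v) = sw u.reverse v.reverse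
  | [], v => by
      rw [sw_nil_left, mapD_single, List.reverse_nil, sw_nil_left]
  | a :: u, [] => by
      rw [sw_nil_right, mapD_single, List.reverse_nil, sw_nil_right]
  | a :: u, b :: v => by
      have IH1 := sw_rev u (b :: v)
      have IH2 := sw_rev (a :: u) v
      rw [sw_cons_cons, Finsupp.mapDomain_add,
        mapD_comm_rev a (sw u (b :: v)), mapD_comm_rev b (sw (a :: u) v),
        IH1, IH2, List.reverse_cons, List.reverse_cons,
        sw_last u.reverse v.reverse a b]
termination_by u v => u.length + v.length

/-- bilinear last-letter recursion for the shuffle product -/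
lemma shuffle_mapD_app (a b : Fin 2) (x y : QA) :
    shuffle (Finsupp.mapDomain (· ++ [a]) x) (Finsupp.mapDomain (· ++ [b]) y) =
      Finsupp.mapDomain (· ++ [a]) (shuffle x (Finsupp.mapDomain (· ++ [b]) y)) +
      Finsupp.mapDomain (· ++ [b]) (shuffle (Finsupp.mapDomain (· ++ [a]) x) y) := by
  induction x using Finsupp.induction_linear with
  | zero => simp [shuffle_zero_left]
  | add f g hf hg =>
      simp only [Finsupp.mapDomain_add, shuffle_add_left, shuffle_add_right, hf, hg]
      abel
  | single u r =>
      induction y using Finsupp.induction_linear with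
      | zero => simp [shuffle_zero_right]
      | add f g hf hg =>
          simp only [Finsupp.mapDomain_add, shuffle_add_left, shuffle_add_right, hf, hg]
          abel
      | single v s =>
          simp only [mapD_single, shuffle_single_single, sw_last u v a b, smul_add,
            Finsupp.mapDomain_smul, Finsupp.mapDomain_add]
lemma conc_single_right (x : QA) (w : Word) :
    conc x (Finsupp.single w 1) = Finsupp.mapDomain (· ++ w) x := by
  unfold conc
  rw [Finsupp.mapDomain]
  apply Finsupp.sum_congr
  intro u _
  rw [Finsupp.sum_single_index (by simp), mul_one]

lemma conc_unit_right (x : QA) : conc x (Finsupp.single ([] : Word) 1) = x := by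
  rw [conc_single_right]
  simp only [List.append_nil]
  exact Finsupp.mapDomain_id

lemma conc_assoc (x y z : QA) : conc (conc x y) z = conc x (conc y z) := by
  induction x using Finsupp.induction_linear with
  | zero => simp [conc_zero_left]
  | add f g hf hg => simp only [conc_add_left, hf, hg]
  | single u r =>
    induction y using Finsupp.induction_linear with
    | zero => simp [conc_zero_left, conc_zero_right]
    | add f g hf hg => simp only [conc_add_left, conc_add_right, hf, hg]
    | single v s =>
      induction z using Finsupp.induction_linear with
      | zero => simp [conc_zero_right]
      | add f g hf hg => simp only [conc_add_right, hf, hg]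
      | single w t => simp only [conc_single_single, List.append_assoc, mul_assoc]

/-- associativity of the shuffle product on basis elements -/
theorem sw_assoc : ∀ (u v w : Word),
    shuffle (sw u v) (Finsupp.single w 1) = shuffle (Finsupp.single u 1) (sw v w)
  | [], v, w => by
      rw [sw_nil_left, shuffle_single_single, one_mul, one_smul, shuffle_unit_left]
  | a :: u, [], w => by
      rw [sw_nil_right, sw_nil_left, shuffle_single_single, one_mul, one_smul]
  | a :: u, b :: v, [] => by
      rw [sw_nil_right, shuffle_unit_right, shuffle_single_single, one_mul, one_smul]
  | a :: u, b :: v, c :: w => by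
      have IH1 := sw_assoc u (b :: v) (c :: w)
      have IH2 := sw_assoc (a :: u) v (c :: w)
      have IH3 := sw_assoc (a :: u) (b :: v) w
      have h1 : (Finsupp.single (c :: w) 1 : QA) =
          Finsupp.mapDomain (c :: ·) (Finsupp.single w 1) := by rw [mapD_single]
      have h2 : (Finsupp.single (a :: u) 1 : QA) =
          Finsupp.mapDomain (a :: ·) (Finsupp.single u 1) := by rw [mapD_single]
      simp only [h1, h2, sw_cons_cons, shuffle_add_left, shuffle_add_right,
        shuffle_mapD_cons, Finsupp.mapDomain_add] at IH1 IH2 IH3 ⊢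
      rw [IH1, IH2, ← IH3]
      simp only [Finsupp.mapDomain_add]
      abel
termination_by u v w => u.length + v.length + w.length
lemma mapD_sum (f : Word → Word) (s : Finset ℕ) (g : ℕ → QA) :
    Finsupp.mapDomain f (∑ i ∈ s, g i) = ∑ i ∈ s, Finsupp.mapDomain f (g i) :=
  map_sum (Finsupp.mapDomain.addMonoidHom f) g s

theorem antipodeB : ∀ (v : Word), v ≠ [] →
    ∑ i ∈ Finset.range (v.length + 1),
      ((-1 : ℚ) ^ i) • sw (v.take i) ((v.drop i).reverse) = 0
  | [], h => absurd rfl h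
  | b :: v', _ => by
    rcases List.eq_nil_or_concat' v' with h' | ⟨v'', c, h'⟩
    · subst h'
      rw [show ([b] : Word).length = 1 from rfl]
      rw [Finset.sum_range_succ, Finset.sum_range_succ, Finset.sum_range_zero]
      simp [sw_nil_left, sw_nil_right]
    · have IH1 := antipodeB v' (by simp [h'])
      have IH2 := antipodeB (b :: v'') (List.cons_ne_nil _ _)
      have hlen : v'.length = v''.length + 1 := by simp [h']
      rw [show (b :: v').length = v'.length + 1 from rfl, Finset.sum_range_succ']
      have split : ∀ j ∈ Finset.range (v'.length + 1),
          ((-1 : ℚ) ^ (j+1)) • sw ((b :: v').take (j+1)) (((b :: v').drop (j+1)).reverse)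
            = (-1 : ℚ) • Finsupp.mapDomain (b :: ·)
                (((-1 : ℚ) ^ j) • sw (v'.take j) ((v'.drop j).reverse))
              + (if j < v'.length then
                  Finsupp.mapDomain (c :: ·)
                    (((-1 : ℚ) ^ (j+1)) • sw ((b :: v'').take (j+1)) (((b :: v'').drop (j+1)).reverse))
                 else 0) := by
        intro j hj
        rw [Finset.mem_range] at hj
        by_cases hlt : j < v'.length
        · have hle : j ≤ v''.length := by omega
          rw [if_pos hlt, List.take_succ_cons, List.drop_succ_cons,
            List.take_succ_cons, List.drop_succ_cons,
            show v'.take j = v''.take j from h' ▸ List.take_append_of_le_length hle,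
            show v'.drop j = v''.drop j ++ [c] from h' ▸ List.drop_append_of_le_length hle,
            show (v''.drop j ++ [c]).reverse = c :: (v''.drop j).reverse by simp,
            sw_cons_cons b c, smul_add, Finsupp.mapDomain_smul, Finsupp.mapDomain_smul,
            smul_smul]
          congr 2
          ring
        · have hj' : j = v'.length := by omega
          subst hj'
          rw [if_neg hlt, add_zero, List.take_succ_cons, List.drop_succ_cons,
            List.take_length, List.drop_length, List.reverse_nil,
            sw_nil_right, sw_nil_right, Finsupp.mapDomain_smul, mapD_single,
            smul_smul]
          congr 1
          ring
      rw [Finset.sum_congr rfl split, Finset.sum_add_distrib, ← Finset.smul_sum,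
        ← mapD_sum, IH1]
      rw [hlen, Finset.sum_range_succ, if_neg (by omega)]
      rw [Finset.sum_congr rfl (fun j hj => if_pos (Finset.mem_range.mp hj)), ← mapD_sum]
      rw [show (b :: v'').length = v''.length + 1 from rfl, Finset.sum_range_succ'] at IH2
      have h2 : ∑ j ∈ Finset.range (v''.length + 1),
          ((-1 : ℚ) ^ (j+1)) • sw ((b :: v'').take (j+1)) (((b :: v'').drop (j+1)).reverse)
          = -Finsupp.single ((b :: v'').reverse) 1 := by
        have := eq_neg_of_add_eq_zero_left IH2
        rw [this]
        simp [sw_nil_left]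
      rw [h2]
      have e1 : Finsupp.mapDomain (c :: ·) (-(Finsupp.single ((b :: v'').reverse) 1) : QA)
          = -(Finsupp.single (c :: (b :: v'').reverse) 1) := by
        rw [← Finsupp.single_neg, mapD_single, Finsupp.single_neg]
      rw [e1]
      have e2 : (b :: v').reverse = c :: (b :: v'').reverse := by simp [h']
      simp [sw_nil_left, e2]
termination_by v => v.length
decreasing_by
  · simp [h']
  · simp [h']
lemma mapD_neg (f : Word → Word) (z : QA) :
    Finsupp.mapDomain f (-z) = -Finsupp.mapDomain f z :=
  map_neg (Finsupp.mapDomain.addMonoidHom f) z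

lemma shuffle_sum_right (x : QA) (s : Finset ℕ) (g : ℕ → QA) :
    shuffle x (∑ i ∈ s, g i) = ∑ i ∈ s, shuffle x (g i) :=
  map_sum (AddMonoidHom.mk' (shuffle x) (shuffle_add_right x)) g s

lemma eps_nil : eps (Finsupp.single ([] : Word) 1) = Finsupp.single ([] : Word) 1 := by
  rw [eps_single]; simp

lemma eps_cons (b : Fin 2) (t : Word) :
    eps (Finsupp.single (b :: t) 1) =
      -conc (eps (Finsupp.single t 1)) (Finsupp.single [b] 1) := by
  rw [eps_single, eps_single, conc_single_single, ← Finsupp.single_neg]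
  simp [pow_succ]

lemma antipodeA (v : Word) (h : v ≠ []) :
    ∑ i ∈ Finset.range (v.length + 1),
      ((-1 : ℚ) ^ i) • sw ((v.take i).reverse) (v.drop i) = 0 := by
  have H := congrArg (Finsupp.mapDomain List.reverse) (antipodeB v h)
  rw [mapD_sum, Finsupp.mapDomain_zero] at H
  rw [← H]
  apply Finset.sum_congr rfl
  intro i _
  rw [Finsupp.mapDomain_smul, sw_rev, List.reverse_reverse]

lemma antipodeC (u : Word) (v : Word) (h : v ≠ []) :
    ∑ i ∈ Finset.range (v.length + 1),
      shuffle (sw u (v.drop i)) (eps (Finsupp.single (v.take i) 1)) = 0 := by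
  have hA := antipodeA v h
  have key : ∀ i ∈ Finset.range (v.length + 1),
      shuffle (sw u (v.drop i)) (eps (Finsupp.single (v.take i) 1))
        = shuffle (Finsupp.single u 1) (((-1 : ℚ) ^ i) • sw ((v.take i).reverse) (v.drop i)) := by
    intro i hi
    rw [Finset.mem_range] at hi
    have hlen : (v.take i).length = i := by
      rw [List.length_take]; omega
    rw [eps_single, hlen, mul_one]
    rw [show (Finsupp.single ((v.take i).reverse) ((-1 : ℚ) ^ i) : QA)
        = ((-1 : ℚ) ^ i) • Finsupp.single ((v.take i).reverse) 1 by
      rw [Finsupp.smul_single, smul_eq_mul, mul_one]]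
    rw [shuffle_smul_right, shuffle_smul_right, sw_assoc, sw_comm (v.drop i) ((v.take i).reverse)]
  rw [Finset.sum_congr rfl key, ← shuffle_sum_right, hA, shuffle_zero_right]

theorem main (u : Word) (a : Fin 2) (v : Word) :
    ∑ i ∈ Finset.range (v.length + 1),
      shuffle (conc (sw u (v.drop i)) (Finsupp.single [a] 1))
        (eps (Finsupp.single (v.take i) 1))
    = conc (conc (Finsupp.single u 1) (Finsupp.single [a] 1)) (eps (Finsupp.single v 1)) := by
  induction v with
  | nil =>
      rw [show ([] : Word).length + 1 = 1 from rfl, Finset.sum_range_one]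
      rw [List.drop_nil, List.take_nil, sw_nil_right, eps_nil, shuffle_unit_right,
        conc_unit_right]
  | cons b v' ih =>
      have hC := antipodeC u (b :: v') (List.cons_ne_nil _ _)
      simp only [List.length_cons] at hC ⊢
      rw [Finset.sum_range_succ'] at hC ⊢
      have split : ∀ j ∈ Finset.range (v'.length + 1),
          shuffle (conc (sw u ((b :: v').drop (j+1))) (Finsupp.single [a] 1))
              (eps (Finsupp.single ((b :: v').take (j+1)) 1))
            = Finsupp.mapDomain (· ++ [a])
                (shuffle (sw u ((b :: v').drop (j+1))) (eps (Finsupp.single ((b :: v').take (j+1)) 1)))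
              - Finsupp.mapDomain (· ++ [b])
                (shuffle (conc (sw u (v'.drop j)) (Finsupp.single [a] 1))
                  (eps (Finsupp.single (v'.take j) 1))) := by
        intro j _
        rw [List.take_succ_cons, List.drop_succ_cons, eps_cons]
        simp only [conc_single_right, shuffle_neg_right, mapD_neg, shuffle_mapD_app a b]
        abel
      rw [Finset.sum_congr rfl split, Finset.sum_sub_distrib, ← mapD_sum, ← mapD_sum, ih]
      have hG : ∑ j ∈ Finset.range (v'.length + 1),
          shuffle (sw u ((b :: v').drop (j+1))) (eps (Finsupp.single ((b :: v').take (j+1)) 1))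
          = -(sw u (b :: v')) := by
        have h0 : shuffle (sw u ((b :: v').drop 0)) (eps (Finsupp.single ((b :: v').take 0) 1))
            = sw u (b :: v') := by
          rw [List.drop_zero, List.take_zero, eps_nil, shuffle_unit_right]
        rw [h0] at hC
        exact eq_neg_of_add_eq_zero_left hC
      rw [hG]
      have h1 : shuffle (conc (sw u ((b :: v').drop 0)) (Finsupp.single [a] 1))
          (eps (Finsupp.single ((b :: v').take 0) 1))
          = Finsupp.mapDomain (· ++ [a]) (sw u (b :: v')) := by
        rw [List.drop_zero, List.take_zero, eps_nil, shuffle_unit_right, conc_single_right]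
      rw [h1, eps_cons, conc_neg_right, ← conc_assoc]
      simp only [conc_single_right, mapD_neg]
      abel
/-- The explicit shuffle identity
`(u ⧢ v)e_a - u e_a ε(v) = -∑_{i=1}^{n} ((u ⧢ e_{b_{i+1}}⋯e_{b_n})e_a) ⧢ ε(e_{b_1}⋯e_{b_i})`. -/
theorem stmt1 (u v : Word) (a : Fin 2) :
    conc (sw u v) (Finsupp.single [a] 1)
      - conc (conc (Finsupp.single u 1) (Finsupp.single [a] 1)) (eps (Finsupp.single v 1))
    = -∑ i ∈ Finset.range v.length,
        shuffle (conc (sw u (v.drop (i + 1))) (Finsupp.single [a] 1))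
          (eps (Finsupp.single (v.take (i + 1)) 1)) := by
  have H := main u a v
  rw [Finset.sum_range_succ'] at H
  have h0 : shuffle (conc (sw u (v.drop 0)) (Finsupp.single [a] 1))
      (eps (Finsupp.single (v.take 0) 1)) = conc (sw u v) (Finsupp.single [a] 1) := by
    rw [List.drop_zero, List.take_zero, eps_nil, shuffle_unit_right]
  rw [h0] at H
  rw [← H]
  abel
end

section
/- Let $A$ be a commutative $\mathbb{Q}$-algebra, and let $g, h: (\mathbb{I}, *) \to A$ be algebra homomorphisms from the harmonic algebra of indices to $A$. Then the map $f: \mathbb{I} \to A$ defined by $f(\Bbbk) = \sum_{i=0}^{d} g(k_1,\dots,k_i)\, h(k_{i+1},\dots,k_d)$ for $\Bbbk = (k_1,\dots,k_d)$ is also an algebra homomorphism with respect to the harmonic product: $f(\Bbbk * \Bbbk') = f(\Bbbk) f(\Bbbk')$. -/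
open Finsupp

/-- The ℚ-vector space `𝕀` with basis all finite tuples of positive integers. -/
abbrev II := List ℕ+ →₀ ℚ

/-- The harmonic (stuffle) product of two indices. -/
noncomputable def harW : List ℕ+ → List ℕ+ → II
  | [], v => Finsupp.single v 1
  | u :: us, [] => Finsupp.single (u :: us) 1
  | k :: ks, l :: ls =>
      Finsupp.mapDomain (k :: ·) (harW ks (l :: ls)) +
      Finsupp.mapDomain (l :: ·) (harW (k :: ks) ls) +
      Finsupp.mapDomain ((k + l) :: ·) (harW ks ls)
termination_by u v => u.length + v.length

/-- The harmonic product on `𝕀`, extended bilinearly. -/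
noncomputable def har (x y : II) : II :=
  x.sum fun u a => y.sum fun v b => (a * b) • harW u v

/-- The harmonic product as a bilinear map. -/
noncomputable def harL : II →ₗ[ℚ] II →ₗ[ℚ] II :=
  Finsupp.lsum ℚ fun u => LinearMap.toSpanSingleton ℚ (II →ₗ[ℚ] II)
    (Finsupp.lsum ℚ fun v => LinearMap.toSpanSingleton ℚ II (harW u v))

noncomputable def consL (a : ℕ+) : II →ₗ[ℚ] II := Finsupp.lmapDomain ℚ ℚ (a :: ·)

lemma consL_single (a : ℕ+) (w : List ℕ+) (c : ℚ) :
    consL a (Finsupp.single w c) = Finsupp.single (a :: w) c := Finsupp.mapDomain_single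

lemma harW_nil_left (v : List ℕ+) : harW [] v = Finsupp.single v 1 := by rw [harW]

lemma harW_nil_right (u : List ℕ+) : harW u [] = Finsupp.single u 1 := by
  cases u <;> rw [harW]

lemma harW_cons (k l : ℕ+) (ks ls : List ℕ+) :
    harW (k :: ks) (l :: ls) = consL k (harW ks (l :: ls)) + consL l (harW (k :: ks) ls) +
      consL (k + l) (harW ks ls) := by
  rw [harW]; rfl

section
variable {A : Type*} [CommRing A] [Algebra ℚ A]

noncomputable def conv (g h : II →ₗ[ℚ] A) : II →ₗ[ℚ] A :=
  Finsupp.lsum ℚ fun w => LinearMap.toSpanSingleton ℚ A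
    (∑ i ∈ Finset.range (w.length + 1),
      g (Finsupp.single (w.take i) 1) * h (Finsupp.single (w.drop i) 1))

lemma conv_single (g h : II →ₗ[ℚ] A) (w : List ℕ+) :
    conv g h (Finsupp.single w 1) = ∑ i ∈ Finset.range (w.length + 1),
      g (Finsupp.single (w.take i) 1) * h (Finsupp.single (w.drop i) 1) := by
  simp [conv]

end

section
variable {A : Type*} [CommRing A] [Algebra ℚ A]

lemma convCons (g h : II →ₗ[ℚ] A) (a : ℕ+) (x : II) :
    conv g h (consL a x) = g (Finsupp.single [] 1) * h (consL a x) +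
      conv (g.comp (consL a)) h x := by
  have : (conv g h).comp (consL a) =
      g (Finsupp.single [] 1) • (h.comp (consL a)) + conv (g.comp (consL a)) h := by
    apply Finsupp.lhom_ext'
    intro w
    apply LinearMap.ext_ring
    simp only [LinearMap.comp_apply, Finsupp.lsingle_apply, LinearMap.add_apply,
      LinearMap.smul_apply, consL_single, conv_single, smul_eq_mul]
    rw [Finset.sum_range_succ']
    simp only [List.take_succ_cons, List.drop_succ_cons, List.take_zero, List.drop_zero,
      List.length_cons]
    ring
  have := LinearMap.congr_fun this x
  simpa [mul_comm] using this
end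

section
variable {A : Type*} [CommRing A] [Algebra ℚ A]

lemma split_inner (n m : ℕ) (F : ℕ → ℕ → A) :
    ∑ i ∈ Finset.range n, ∑ j ∈ Finset.range (m + 1), F i j =
      (∑ i ∈ Finset.range n, ∑ j ∈ Finset.range m, F i (j + 1)) +
        ∑ i ∈ Finset.range n, F i 0 := by
  simp only [Finset.sum_range_succ']
  rw [Finset.sum_add_distrib]

lemma split_outer (n m : ℕ) (F : ℕ → ℕ → A) :
    ∑ i ∈ Finset.range (n + 1), ∑ j ∈ Finset.range m, F i j =
      (∑ i ∈ Finset.range n, ∑ j ∈ Finset.range m, F (i + 1) j) +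
        ∑ j ∈ Finset.range m, F 0 j :=
  Finset.sum_range_succ' _ n

lemma double_split (n m : ℕ) (F : ℕ → ℕ → A) :
    ∑ i ∈ Finset.range (n + 1), ∑ j ∈ Finset.range (m + 1), F i j =
      (((∑ i ∈ Finset.range n, ∑ j ∈ Finset.range m, F (i + 1) (j + 1)) +
        ∑ i ∈ Finset.range n, F (i + 1) 0) +
        ∑ j ∈ Finset.range m, F 0 (j + 1)) + F 0 0 := by
  rw [split_inner, split_outer, Finset.sum_range_succ' (fun i => F i 0) n]
  ring

theorem key : ∀ (u v : List ℕ+) (g h : II →ₗ[ℚ] A),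
    conv g h (harW u v) =
      ∑ i ∈ Finset.range (u.length + 1), ∑ j ∈ Finset.range (v.length + 1),
        g (harW (u.take i) (v.take j)) * h (harW (u.drop i) (v.drop j))
  | [], v, g, h => by
      simp [harW_nil_left, conv_single]
  | k :: ks, [], g, h => by
      simp [harW_nil_right, conv_single]
  | k :: ks, l :: ls, g, h => by
      rw [harW_cons, map_add, map_add, convCons, convCons, convCons,
        key ks (l :: ls) (g.comp (consL k)) h,
        key (k :: ks) ls (g.comp (consL l)) h,
        key ks ls (g.comp (consL (k + l))) h]
      simp only [List.length_cons]
      conv_lhs => enter [1,1,2]; rw [split_inner]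
      conv_lhs => enter [1,2,2]; rw [split_outer]
      conv_rhs => rw [double_split]
      simp only [List.take_succ_cons, List.drop_succ_cons, List.take_zero, List.drop_zero,
        harW_nil_left, harW_nil_right, harW_cons, consL_single, map_add, add_mul, mul_add,
        LinearMap.comp_apply, Finset.sum_add_distrib]
      ring
termination_by u v => u.length + v.length

end

lemma harL_single_single (u v : List ℕ+) (a b : ℚ) :
    harL (Finsupp.single u a) (Finsupp.single v b) = (a * b) • harW u v := by
  simp [harL, smul_smul]

/-- The convolution (with respect to the deconcatenation coproduct) of two algebra
homomorphisms `g, h : (𝕀,*) → A` into a commutative `ℚ`-algebra is again an algebra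
homomorphism for the harmonic product. -/
theorem stmt5 (A : Type*) [CommRing A] [Algebra ℚ A] (g h : II →ₗ[ℚ] A)
    (hg : ∀ x y : II, g (harL x y) = g x * g y)
    (hh : ∀ x y : II, h (harL x y) = h x * h y)
    (f : II →ₗ[ℚ] A)
    (hf : ∀ k : List ℕ+, f (Finsupp.single k 1) =
      ∑ i ∈ Finset.range (k.length + 1),
        g (Finsupp.single (k.take i) 1) * h (Finsupp.single (k.drop i) 1)) :
    ∀ x y : II, f (harL x y) = f x * f y := by
  have hfc : f = conv g h := by
    apply Finsupp.lhom_ext'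
    intro w
    apply LinearMap.ext_ring
    simp [hf, conv_single]
  have hgW : ∀ a b : List ℕ+, g (harW a b) =
      g (Finsupp.single a 1) * g (Finsupp.single b 1) := by
    intro a b
    have := hg (Finsupp.single a 1) (Finsupp.single b 1)
    rwa [harL_single_single, one_mul, one_smul] at this
  have hhW : ∀ a b : List ℕ+, h (harW a b) =
      h (Finsupp.single a 1) * h (Finsupp.single b 1) := by
    intro a b
    have := hh (Finsupp.single a 1) (Finsupp.single b 1)
    rwa [harL_single_single, one_mul, one_smul] at this
  have hcore : ∀ u v : List ℕ+, f (harW u v) =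
      f (Finsupp.single u 1) * f (Finsupp.single v 1) := by
    intro u v
    rw [hfc, key, conv_single, conv_single, Finset.sum_mul_sum]
    refine Finset.sum_congr rfl fun i _ => Finset.sum_congr rfl fun j _ => ?_
    rw [hgW, hhW]
    ring
  intro x y
  induction x using Finsupp.induction_linear with
  | zero => simp
  | add a b ha hb => simp [map_add, add_mul, ha, hb]
  | single u a =>
    induction y using Finsupp.induction_linear with
    | zero => simp
    | add c d hc hd => simp [map_add, mul_add, hc, hd]
    | single v b =>
      rw [harL_single_single, map_smul, hcore,
        show (Finsupp.single u a : II) = a • Finsupp.single u 1 by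
          rw [Finsupp.smul_single, smul_eq_mul, mul_one],
        show (Finsupp.single v b : II) = b • Finsupp.single v 1 by
          rw [Finsupp.smul_single, smul_eq_mul, mul_one],
        map_smul, map_smul, smul_mul_assoc, mul_smul_comm, smul_smul]
end
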